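/- arXiv:0903.1348 — 2 statements merged into one kernel-verified Lean document; each statement's English description precedes it below -/
import Mathlib

section
/- Let θ ∈ (0, π/2], let f : ℝ → ℝ³ be a twice continuously differentiable curve with ‖f(v)‖ = 1 and ‖f'(v)‖ = 1 for all v ∈ ℝ, and for u > 0 set ξ(u) = cot θ · log u and r(u,v) = u·sin θ·(cos ξ(u) · f(v) + sin ξ(u) · (f(v) × f'(v))). Then for every u > 0 and v ∈ ℝ the partial derivative of r with respect to v equals u·sin θ·(cos ξ(u) − κ_g(v)·sin ξ(u)) · f'(v), where κ_g(v) = ⟨f''(v), f(v) × f'(v)⟩; in particular ∂r/∂v(u,v) is a scalar multiple of f'(v). -/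
open Real RealInnerProductSpace

/-- The cross product on Euclidean 3-space. -/
noncomputable def cross3 (a b : EuclideanSpace ℝ (Fin 3)) : EuclideanSpace ℝ (Fin 3) :=
  WithLp.toLp 2 ![a 1 * b 2 - a 2 * b 1, a 2 * b 0 - a 0 * b 2, a 0 * b 1 - a 1 * b 0]

noncomputable def crossL : EuclideanSpace ℝ (Fin 3) →L[ℝ]
    EuclideanSpace ℝ (Fin 3) →L[ℝ] EuclideanSpace ℝ (Fin 3) :=
  LinearMap.toContinuousLinearMap
  { toFun := fun a => LinearMap.toContinuousLinearMap
      { toFun := fun b => cross3 a b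
        map_add' := by
          intro x y; ext i; fin_cases i <;>
            simp [cross3, PiLp.add_apply] <;> ring
        map_smul' := by
          intro m x; ext i; fin_cases i <;>
            simp [cross3, PiLp.smul_apply, smul_eq_mul] <;> ring }
    map_add' := by
      intro x y; ext b i; fin_cases i <;>
        simp [cross3, PiLp.add_apply] <;> ring
    map_smul' := by
      intro m x; ext b i; fin_cases i <;>
        simp [cross3, PiLp.smul_apply, smul_eq_mul] <;> ring }

lemma crossL_apply (a b : EuclideanSpace ℝ (Fin 3)) : crossL a b = cross3 a b := rfl

lemma cross3_self (a : EuclideanSpace ℝ (Fin 3)) : cross3 a a = 0 := by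
  ext i; fin_cases i <;> simp [cross3] <;> ring

lemma cross3_key (a b c : EuclideanSpace ℝ (Fin 3))
    (hb : ⟪b, b⟫ = 1) (hab : ⟪a, b⟫ = 0) (hbc : ⟪b, c⟫ = 0) :
    cross3 a c = (-⟪c, cross3 a b⟫) • b := by
  simp only [PiLp.inner_apply, RCLike.inner_apply, conj_trivial, Fin.sum_univ_three,
    cross3] at hb hab hbc ⊢
  ext i
  fin_cases i <;>
    simp [cross3, PiLp.smul_apply, smul_eq_mul] <;>
  · first
    | linear_combination (-(a 1 * c 2 - a 2 * c 1)) * hb + (b 1 * c 2 - b 2 * c 1) * hab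
        + (-(b 1 * a 2 - b 2 * a 1)) * hbc
    | linear_combination (-(a 2 * c 0 - a 0 * c 2)) * hb + (b 2 * c 0 - b 0 * c 2) * hab
        + (-(b 2 * a 0 - b 0 * a 2)) * hbc
    | linear_combination (-(a 0 * c 1 - a 1 * c 0)) * hb + (b 0 * c 1 - b 1 * c 0) * hab
        + (-(b 0 * a 1 - b 1 * a 0)) * hbc

section calc1
variable (f : ℝ → EuclideanSpace ℝ (Fin 3)) (hf : ContDiff ℝ 2 f)

lemma aux_diff (hf : ContDiff ℝ 2 f) :
    (∀ v, HasDerivAt f (deriv f v) v) ∧ (∀ v, HasDerivAt (deriv f) (deriv (deriv f) v) v) := by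
  have h2 : (2 : WithTop ℕ∞) = 1 + 1 := by norm_num
  rw [h2, contDiff_succ_iff_deriv] at hf
  refine ⟨fun v => (hf.1 v).hasDerivAt, fun v => ?_⟩
  exact ((hf.2.2.differentiable one_ne_zero) v).hasDerivAt

lemma inner_eq_one_of_norm_one {g : ℝ → EuclideanSpace ℝ (Fin 3)} (h : ∀ v, ‖g v‖ = 1)
    (v : ℝ) : ⟪g v, g v⟫ = 1 := by
  rw [real_inner_self_eq_norm_sq, h, one_pow]

lemma deriv_inner_zero {g : ℝ → EuclideanSpace ℝ (Fin 3)}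
    (hg : ∀ v, HasDerivAt g (deriv g v) v) (h : ∀ v, ‖g v‖ = 1) (v : ℝ) :
    ⟪g v, deriv g v⟫ = 0 := by
  have h1 : HasDerivAt (fun t => ⟪g t, g t⟫) (⟪g v, deriv g v⟫ + ⟪deriv g v, g v⟫) v :=
    (hg v).inner ℝ (hg v)
  have h2 : HasDerivAt (fun t => ⟪g t, g t⟫) 0 v := by
    have : (fun t => ⟪g t, g t⟫) = fun _ => (1:ℝ) :=
      funext fun t => inner_eq_one_of_norm_one h t
    rw [this]; exact hasDerivAt_const v 1
  have h3 := h1.unique h2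
  have hc : ⟪deriv g v, g v⟫ = ⟪g v, deriv g v⟫ := real_inner_comm _ _
  linarith
end calc1

/-- `∂r/∂v = u sin θ (cos ξ − κ_g sin ξ) f'(v)`, where
`κ_g(v) = ⟨f''(v), f(v) × f'(v)⟩`; in particular `∂r/∂v` is a multiple of `f'(v)`. -/
theorem deriv_v_constant_slope (θ : ℝ) (hθ : θ ∈ Set.Ioc 0 (π / 2))
    (f : ℝ → EuclideanSpace ℝ (Fin 3)) (hf : ContDiff ℝ 2 f)
    (hf1 : ∀ v, ‖f v‖ = 1) (hf'1 : ∀ v, ‖deriv f v‖ = 1)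
    (r : ℝ → ℝ → EuclideanSpace ℝ (Fin 3))
    (hr : ∀ u v, 0 < u → r u v = (u * Real.sin θ) •
      (Real.cos (Real.cot θ * Real.log u) • f v +
       Real.sin (Real.cot θ * Real.log u) • cross3 (f v) (deriv f v)))
    :
    ∀ u v, 0 < u →
      deriv (fun v' => r u v') v =
        (u * Real.sin θ * (Real.cos (Real.cot θ * Real.log u) -
          ⟪deriv (deriv f) v, cross3 (f v) (deriv f v)⟫ *
            Real.sin (Real.cot θ * Real.log u))) • deriv f v := by
  obtain ⟨hd1, hd2⟩ := aux_diff f hf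
  intro u v hu
  have hgeq : (fun v' => r u v') = fun v' => (u * Real.sin θ) •
      (Real.cos (Real.cot θ * Real.log u) • f v' +
       Real.sin (Real.cot θ * Real.log u) • cross3 (f v') (deriv f v')) :=
    funext fun v' => hr u v' hu
  rw [hgeq]
  set ξ := Real.cot θ * Real.log u
  set κ : ℝ := ⟪deriv (deriv f) v, cross3 (f v) (deriv f v)⟫ with hκ
  -- derivative of the cross product term
  have hcl : HasDerivAt (fun t => crossL (f t)) (crossL (deriv f v)) v :=
    crossL.hasFDerivAt.comp_hasDerivAt v (hd1 v)
  have hcross : HasDerivAt (fun t => crossL (f t) (deriv f t))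
      (crossL (deriv f v) (deriv f v) + crossL (f v) (deriv (deriv f) v)) v :=
    hcl.clm_apply (hd2 v)
  have hmain : HasDerivAt (fun v' => (u * Real.sin θ) •
      (Real.cos ξ • f v' + Real.sin ξ • cross3 (f v') (deriv f v')))
      ((u * Real.sin θ) • (Real.cos ξ • deriv f v +
        Real.sin ξ • (crossL (deriv f v) (deriv f v) + crossL (f v) (deriv (deriv f) v)))) v := by
    simp only [← crossL_apply]
    exact (((hd1 v).const_smul (Real.cos ξ)).add (hcross.const_smul (Real.sin ξ))).const_smul
      (u * Real.sin θ)
  rw [hmain.deriv]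
  -- simplify the derivative vector
  have e1 : crossL (deriv f v) (deriv f v) = 0 := by
    rw [crossL_apply, cross3_self]
  have e2 : crossL (f v) (deriv (deriv f) v) = (-κ) • deriv f v := by
    rw [crossL_apply, hκ]
    exact cross3_key (f v) (deriv f v) (deriv (deriv f) v)
      (inner_eq_one_of_norm_one hf'1 v)
      (deriv_inner_zero hd1 hf1 v)
      (deriv_inner_zero hd2 hf'1 v)
  rw [e1, e2]
  module
end

section
/- Let θ ∈ (0, π/2], let f : ℝ → ℝ³ be a twice continuously differentiable curve with ‖f(v)‖ = 1 and ‖f'(v)‖ = 1 for all v ∈ ℝ, and for u > 0 set ξ(u) = cot θ · log u and r(u,v) = u·sin θ·(cos ξ(u) · f(v) + sin ξ(u) · (f(v) × f'(v))). Define N(u,v) = cos(ξ(u) − θ) · f(v) + sin(ξ(u) − θ) · (f(v) × f'(v)). Then ⟨N(u,v), r(u,v)⟩ = cos θ · u · sin θ = cos θ · ‖r(u,v)‖ for all u > 0 and v ∈ ℝ. -/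
open Real RealInnerProductSpace

lemma inner3 (x y : EuclideanSpace ℝ (Fin 3)) :
    ⟪x, y⟫ = x 0 * y 0 + x 1 * y 1 + x 2 * y 2 := by
  simp [PiLp.inner_apply, Fin.sum_univ_three]; ring

lemma inner_self_cross3 (a b : EuclideanSpace ℝ (Fin 3)) : ⟪a, cross3 a b⟫ = 0 := by
  simp [inner3, cross3, Fin.sum_univ_three]; ring

lemma inner_cross3_self (a b : EuclideanSpace ℝ (Fin 3)) : ⟪cross3 a b, a⟫ = 0 := by
  simp [inner3, cross3, Fin.sum_univ_three]; ring

lemma inner_cross3_cross3 (a b : EuclideanSpace ℝ (Fin 3)) :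
    ⟪cross3 a b, cross3 a b⟫ = ⟪a,a⟫ * ⟪b,b⟫ - ⟪a,b⟫ ^ 2 := by
  rw [inner3, inner3, inner3, inner3]; simp [cross3]; ring

lemma inner_deriv_zero (f : ℝ → EuclideanSpace ℝ (Fin 3)) (hf : ContDiff ℝ 2 f)
    (hf1 : ∀ v, ‖f v‖ = 1) (v : ℝ) : ⟪f v, deriv f v⟫ = 0 := by
  have hd : ∀ w, HasDerivAt f (deriv f w) w := fun w =>
    ((hf.differentiable two_ne_zero) w).hasDerivAt
  have h1 : ∀ w, ⟪f w, f w⟫ = (1 : ℝ) := by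
    intro w
    rw [real_inner_self_eq_norm_mul_norm, hf1 w, one_mul]
  have h2 : HasDerivAt (fun w => ⟪f w, f w⟫) (⟪f v, deriv f v⟫ + ⟪deriv f v, f v⟫) v :=
    (hd v).inner ℝ (hd v)
  have h3 : HasDerivAt (fun w => ⟪f w, f w⟫) 0 v := by
    have : (fun w => ⟪f w, f w⟫) = fun _ => (1 : ℝ) := funext h1
    rw [this]; exact hasDerivAt_const v 1
  have h4 := h2.unique h3
  rw [real_inner_comm (f v) (deriv f v)] at h4
  linarith

/-- `⟨N(u,v), r(u,v)⟩ = cos θ · u sin θ = cos θ · ‖r(u,v)‖`. -/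
theorem inner_normal_position_constant_slope (θ : ℝ) (hθ : θ ∈ Set.Ioc 0 (π / 2))
    (f : ℝ → EuclideanSpace ℝ (Fin 3)) (hf : ContDiff ℝ 2 f)
    (hf1 : ∀ v, ‖f v‖ = 1) (hf'1 : ∀ v, ‖deriv f v‖ = 1)
    (r : ℝ → ℝ → EuclideanSpace ℝ (Fin 3))
    (hr : ∀ u v, 0 < u → r u v = (u * Real.sin θ) •
      (Real.cos (Real.cot θ * Real.log u) • f v +
       Real.sin (Real.cot θ * Real.log u) • cross3 (f v) (deriv f v)))
    (N : ℝ → ℝ → EuclideanSpace ℝ (Fin 3))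
    (hN : ∀ u v, 0 < u → N u v =
      Real.cos (Real.cot θ * Real.log u - θ) • f v +
      Real.sin (Real.cot θ * Real.log u - θ) • cross3 (f v) (deriv f v)) :
    ∀ u v, 0 < u →
      ⟪N u v, r u v⟫ = Real.cos θ * (u * Real.sin θ) ∧
      ⟪N u v, r u v⟫ = Real.cos θ * ‖r u v‖ := by
  intro u v hu
  set ξ := Real.cot θ * Real.log u with hξ
  set a := f v
  set c := cross3 (f v) (deriv f v)
  have haa : ⟪a, a⟫ = (1 : ℝ) := by
    rw [real_inner_self_eq_norm_mul_norm, hf1 v, one_mul]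
  have hbb : ⟪deriv f v, deriv f v⟫ = (1 : ℝ) := by
    rw [real_inner_self_eq_norm_mul_norm, hf'1 v, one_mul]
  have hab : ⟪a, deriv f v⟫ = 0 := inner_deriv_zero f hf hf1 v
  have hac : ⟪a, c⟫ = 0 := inner_self_cross3 _ _
  have hca : ⟪c, a⟫ = 0 := inner_cross3_self _ _
  have hcc : ⟪c, c⟫ = (1 : ℝ) := by
    rw [inner_cross3_cross3, haa, hbb, hab]; ring
  have key : ⟪N u v, r u v⟫ = Real.cos θ * (u * Real.sin θ) := by
    rw [hN u v hu, hr u v hu]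
    rw [inner_smul_right, inner_add_left, inner_add_right, inner_add_right,
      inner_smul_left, inner_smul_left, inner_smul_left, inner_smul_left,
      inner_smul_right, inner_smul_right, inner_smul_right, inner_smul_right]
    simp only [RCLike.star_def, starRingEnd_apply, star_trivial]
    rw [haa, hac, hca, hcc]
    have : Real.cos (ξ - θ) * Real.cos ξ + Real.sin (ξ - θ) * Real.sin ξ
        = Real.cos θ := by
      rw [← Real.cos_sub, show ξ - θ - ξ = -θ by ring, Real.cos_neg]
    linear_combination (u * Real.sin θ) * this
  have hnorm : ‖r u v‖ = u * Real.sin θ := by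
    have hpos : 0 < u * Real.sin θ :=
      mul_pos hu (Real.sin_pos_of_pos_of_lt_pi hθ.1 (lt_of_le_of_lt hθ.2 (by linarith [Real.pi_pos])))
    have hsq : ⟪r u v, r u v⟫ = (u * Real.sin θ) ^ 2 := by
      rw [hr u v hu]
      rw [inner_smul_left, inner_smul_right, inner_add_left, inner_add_right, inner_add_right,
        inner_smul_left, inner_smul_left, inner_smul_left, inner_smul_left,
        inner_smul_right, inner_smul_right, inner_smul_right, inner_smul_right]
      simp only [RCLike.star_def, starRingEnd_apply, star_trivial]
      rw [haa, hac, hca, hcc]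
      have := Real.sin_sq_add_cos_sq ξ
      linear_combination (u * Real.sin θ) ^ 2 * this
    have := real_inner_self_eq_norm_sq (r u v)
    nlinarith [norm_nonneg (r u v), hpos]
  refine ⟨key, ?_⟩
  rw [key, hnorm]
end
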